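/- Let a, b, c, d ∈ ℂ and define H_III(x,u,v) = (1/x)·[2u²v² − (2axu² + (2b+1)u − 2cx)v + a(b+d)xu]. Then there exist complex numbers α, β, γ, δ (depending only on a, b, c, d) such that for every open set Ω ⊆ ℂ and all differentiable functions u, v : Ω → ℂ with x ≠ 0 and u(x) ≠ 0 for all x ∈ Ω, if u'(x) = (∂H_III/∂v)(x,u(x),v(x)) and v'(x) = −(∂H_III/∂u)(x,u(x),v(x)) for all x ∈ Ω, then u''(x) = u'(x)²/u(x) − u'(x)/x + (α·u(x)² + β)/x + γ·u(x)³ + δ/u(x) for all x ∈ Ω. -/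

import Mathlib

lemma dHv_aux (a b c d x u0 v0 : ℂ) :
    HasDerivAt (fun w => (1 / x) * (2 * u0 ^ 2 * w ^ 2
        - (2 * a * x * u0 ^ 2 + (2 * b + 1) * u0 - 2 * c * x) * w
        + a * (b + d) * x * u0))
      ((4 * u0 ^ 2 * v0 - (2 * a * x * u0 ^ 2 + (2 * b + 1) * u0 - 2 * c * x)) / x) v0 := by
  have h := ((((hasDerivAt_pow 2 v0).const_mul (2 * u0 ^ 2)).sub
      ((hasDerivAt_id' v0).const_mul
        (2 * a * x * u0 ^ 2 + (2 * b + 1) * u0 - 2 * c * x))).add_const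
      (a * (b + d) * x * u0)).const_mul (1 / x)
  refine h.congr_deriv ?_
  ring

lemma dHu_aux (a b c d x u0 v0 : ℂ) :
    HasDerivAt (fun w => (1 / x) * (2 * w ^ 2 * v0 ^ 2
        - (2 * a * x * w ^ 2 + (2 * b + 1) * w - 2 * c * x) * v0
        + a * (b + d) * x * w))
      ((4 * u0 * v0 ^ 2 - (4 * a * x * u0 + (2 * b + 1)) * v0 + a * (b + d) * x) / x) u0 := by
  have h1 : HasDerivAt (fun w : ℂ => 2 * w ^ 2 * v0 ^ 2) (2 * (2 * u0 ^ 1) * v0 ^ 2) u0 :=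
    ((hasDerivAt_pow 2 u0).const_mul 2).mul_const (v0 ^ 2)
  have h2 : HasDerivAt (fun w : ℂ => (2 * a * x * w ^ 2 + (2 * b + 1) * w - 2 * c * x) * v0)
      ((2 * a * x * (2 * u0 ^ 1) + (2 * b + 1) * 1) * v0) u0 :=
    ((((hasDerivAt_pow 2 u0).const_mul (2 * a * x)).add
      ((hasDerivAt_id' u0).const_mul (2 * b + 1))).sub_const (2 * c * x)).mul_const v0
  have h3 : HasDerivAt (fun w : ℂ => a * (b + d) * x * w) (a * (b + d) * x) u0 := by
    simpa using (hasDerivAt_id' u0).const_mul (a * (b + d) * x)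
  have h := ((h1.sub h2).add h3).const_mul (1 / x)
  refine h.congr_deriv ?_
  ring


/-- The Okamoto Hamiltonian of the third Painlevé equation:
`H_III(x,u,v) = (1/x)·[2u²v² − (2axu² + (2b+1)u − 2cx)v + a(b+d)xu]`. -/
noncomputable def HIII (a b c d x u v : ℂ) : ℂ :=
  (1 / x) * (2 * u ^ 2 * v ^ 2 - (2 * a * x * u ^ 2 + (2 * b + 1) * u - 2 * c * x) * v
    + a * (b + d) * x * u)

set_option maxHeartbeats 1600000 in
/-- Painlevé III admits a rational Hamiltonian form: there exist parameters `α β γ δ`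
(depending only on `a b c d`) such that any solution `(u,v)` of the Hamiltonian system
`u' = ∂H_III/∂v`, `v' = −∂H_III/∂u` on an open set `Ω ⊆ ℂ` (with `x ≠ 0`, `u ≠ 0` on `Ω`)
has `u` a solution of the third Painlevé equation `P_III(α,β,γ,δ)`. -/
theorem stmt_8 (a b c d : ℂ) :
    ∃ α β γ δ : ℂ, ∀ (Ω : Set ℂ), IsOpen Ω → ∀ u v : ℂ → ℂ,
      (∀ x ∈ Ω, x ≠ 0) → (∀ x ∈ Ω, u x ≠ 0) →
      (∀ x ∈ Ω, HasDerivAt u (deriv (fun w => HIII a b c d x (u x) w) (v x)) x) →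
      (∀ x ∈ Ω, HasDerivAt v (-(deriv (fun w => HIII a b c d x w (v x)) (u x))) x) →
      ∀ x ∈ Ω, deriv (deriv u) x =
        (deriv u x) ^ 2 / u x - deriv u x / x + (α * (u x) ^ 2 + β) / x
          + γ * (u x) ^ 3 + δ / u x := by
  refine ⟨-4 * a * d, 4 * c * (b + 1), 4 * a ^ 2, -4 * c ^ 2, ?_⟩
  intro Ω hΩ u v hx0 hu0 hu hv x hx
  have hxne := hx0 x hx
  have hune := hu0 x hx
  -- rewrite the Hamiltonian system explicitly
  have hU : ∀ y ∈ Ω, HasDerivAt u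
      ((4 * (u y) ^ 2 * (v y) - (2 * a * y * (u y) ^ 2 + (2 * b + 1) * (u y) - 2 * c * y)) / y)
      y := by
    intro y hy
    have h := hu y hy
    rwa [show deriv (fun w => HIII a b c d y (u y) w) (v y)
        = (4 * (u y) ^ 2 * (v y)
          - (2 * a * y * (u y) ^ 2 + (2 * b + 1) * (u y) - 2 * c * y)) / y from
      (dHv_aux a b c d y (u y) (v y)).deriv] at h
  have hvx : HasDerivAt v
      (-((4 * (u x) * (v x) ^ 2 - (4 * a * x * (u x) + (2 * b + 1)) * (v x)
        + a * (b + d) * x) / x)) x := by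
    have h := hv x hx
    rwa [show deriv (fun w => HIII a b c d x w (v x)) (u x)
        = (4 * (u x) * (v x) ^ 2 - (4 * a * x * (u x) + (2 * b + 1)) * (v x)
          + a * (b + d) * x) / x from
      (dHu_aux a b c d x (u x) (v x)).deriv] at h
  have hux := hU x hx
  -- the first derivative of u agrees near x with the explicit rational expression
  have heq : deriv u =ᶠ[nhds x]
      (fun y => (4 * (u y) ^ 2 * (v y)
        - (2 * a * y * (u y) ^ 2 + (2 * b + 1) * (u y) - 2 * c * y)) / y) :=
    Filter.eventuallyEq_of_mem (hΩ.mem_nhds hx) (fun y hy => (hU y hy).deriv)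
  -- differentiate the explicit rational expression
  have hG := ((((hux.pow 2).const_mul (4 : ℂ)).mul hvx).sub
      (((((hasDerivAt_id' x).const_mul (2 * a)).mul (hux.pow 2)).add
        (hux.const_mul (2 * b + 1))).sub ((hasDerivAt_id' x).const_mul (2 * c))))
  have hUx := hG.div (hasDerivAt_id' x) hxne
  rw [heq.deriv_eq, show deriv (fun y => (4 * (u y) ^ 2 * (v y)
        - (2 * a * y * (u y) ^ 2 + (2 * b + 1) * (u y) - 2 * c * y)) / y) x = _ from hUx.deriv, hux.deriv]
  simp only [Pi.pow_apply, Pi.mul_apply, Pi.sub_apply, Pi.add_apply]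
  field_simp
  field_simp [hxne, hune]
  ring
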